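/- Let R be a ring, R' an R-algebra, and M a finitely presented right R-module with Ext^1_R(M, X) = 0 for every R'-module X (viewed as an R-module via R → R'). Then M ⊗_R R' is a finitely generated projective R'-module. -/

import Mathlib

open CategoryTheory TensorProduct

/-- `Tor₁^R(M, N)`, as an object of `ModuleCat R`. -/
noncomputable def tor1 (R : Type) [CommRing R] (M N : Type) [AddCommGroup M] [Module R M]
    [AddCommGroup N] [Module R N] : ModuleCat R :=
  ((Tor (ModuleCat R) 1).obj (ModuleCat.of R M)).obj (ModuleCat.of R N)

/-- `Ext¹_R(M, N) = 0`, expressed concretely: every short exact sequence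
`0 → N → X → M → 0` splits. -/
def Ext1Vanishes (R : Type) [CommRing R] (M N : Type) [AddCommGroup M] [Module R M]
    [AddCommGroup N] [Module R N] : Prop :=
  ∀ (X : Type) [AddCommGroup X] [Module R X] (i : N →ₗ[R] X) (p : X →ₗ[R] M),
    Function.Injective i → Function.Surjective p →
    LinearMap.range i = LinearMap.ker p →
    ∃ s : M →ₗ[R] X, p ∘ₗ s = LinearMap.id

/-- Let `R → R'` be a ring epimorphism with `Tor₁^R(R', R') = 0`
(a homological epimorphism in degrees ≤ 1), and let `M` be a finitely presented
`R`-module with `Ext¹_R(M, X) = 0` for every `R'`-module `X` (viewed as an `R`-module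
by restriction of scalars).  Then `M ⊗_R R'` is a finitely generated projective
`R'`-module. -/
theorem stmt7 {R R' : Type} [CommRing R] [Ring R'] [Algebra R R']
    (hepi : ∀ (T : Type) [Ring T] (g h : R' →+* T),
      g.comp (algebraMap R R') = h.comp (algebraMap R R') → g = h)
    (htor : Subsingleton ↥(tor1 R R' R'))
    {M : Type} [AddCommGroup M] [Module R M]
    (hM : Module.FinitePresentation R M)
    (hext : ∀ (X : Type) [AddCommGroup X] [Module R X] [Module R' X] [IsScalarTower R R' X],
      Ext1Vanishes R M X) :
    Module.Finite R' (R' ⊗[R] M) ∧ Module.Projective R' (R' ⊗[R] M) := by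
  haveI : Module.FinitePresentation R M := hM
  refine ⟨inferInstance, ?_⟩
  obtain ⟨n, f, hf⟩ := Module.Finite.exists_fin' R' (R' ⊗[R] M)
  set K : Submodule R' (Fin n → R') := LinearMap.ker f with hK
  let ι : M →ₗ[R] R' ⊗[R] M := (TensorProduct.mk R R' M) 1
  let g : ((Fin n → R') × M) →ₗ[R] R' ⊗[R] M :=
    (f.restrictScalars R).comp (LinearMap.fst R (Fin n → R') M) -
      ι.comp (LinearMap.snd R (Fin n → R') M)
  set E : Submodule R ((Fin n → R') × M) := LinearMap.ker g with hE
  have memE : ∀ v m, (v, m) ∈ E ↔ f v = ι m := by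
    intro v m
    simp only [hE, LinearMap.mem_ker, LinearMap.sub_apply, LinearMap.comp_apply,
      LinearMap.fst_apply, LinearMap.snd_apply, LinearMap.restrictScalars_apply, g,
      sub_eq_zero]
  let i : K →ₗ[R] E :=
    { toFun := fun k => ⟨(k.1, 0), by
        rw [memE]
        have : f k.1 = 0 := k.2
        simp [this, ι]⟩
      map_add' := by intro a b; ext <;> simp
      map_smul' := by intro r a; ext <;> simp }
  let p : E →ₗ[R] M := (LinearMap.snd R (Fin n → R') M).comp E.subtype
  have hi : Function.Injective i := by
    intro a b hab
    have h1 : (a : Fin n → R') = b := congrArg (fun x : E => (x : (Fin n → R') × M).1) hab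
    exact Subtype.ext h1
  have hp : Function.Surjective p := by
    intro m
    obtain ⟨v, hv⟩ := hf (ι m)
    exact ⟨⟨(v, m), (memE v m).2 hv⟩, rfl⟩
  have hrange : LinearMap.range i = LinearMap.ker p := by
    ext x
    simp only [LinearMap.mem_range, LinearMap.mem_ker]
    constructor
    · rintro ⟨k, rfl⟩; rfl
    · intro hx
      have hx2 : (x : (Fin n → R') × M).2 = 0 := hx
      have hxE := x.2
      refine ⟨⟨(x : (Fin n → R') × M).1, ?_⟩, ?_⟩
      · have := (memE (x : (Fin n → R') × M).1 (x : (Fin n → R') × M).2).1 hxE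
        rw [hx2] at this
        simpa [ι, hK] using this
      · apply Subtype.ext
        exact Prod.ext rfl hx2.symm
  obtain ⟨s, hs⟩ := hext K E i p hi hp hrange
  let σ : M →ₗ[R] (Fin n → R') := (LinearMap.fst R (Fin n → R') M).comp (E.subtype.comp s)
  have hσ : ∀ m : M, f (σ m) = (1 : R') ⊗ₜ[R] m := by
    intro m
    have h1 := (memE ((s m) : (Fin n → R') × M).1 ((s m) : (Fin n → R') × M).2).1 (s m).2
    have h2 : ((s m) : (Fin n → R') × M).2 = m := DFunLike.congr_fun hs m
    rw [h2] at h1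
    exact h1
  let F : R' →ₗ[R'] (M →ₗ[R] Fin n → R') :=
    { toFun := fun a => a • σ
      map_add' := fun a b => add_smul a b σ
      map_smul' := fun a b => mul_smul a b σ }
  let σ' : R' ⊗[R] M →ₗ[R'] (Fin n → R') := TensorProduct.AlgebraTensorModule.lift F
  have hsplit : f.comp σ' = LinearMap.id := by
    refine TensorProduct.AlgebraTensorModule.ext fun x m => ?_
    have : σ' (x ⊗ₜ[R] m) = x • σ m := by
      simp only [σ', TensorProduct.AlgebraTensorModule.lift_tmul, F, LinearMap.coe_mk,
        AddHom.coe_mk, LinearMap.smul_apply]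
    rw [LinearMap.comp_apply, this, LinearMap.id_apply, map_smul, hσ,
      TensorProduct.smul_tmul', smul_eq_mul, mul_one]
  exact Module.Projective.of_split σ' f hsplit
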